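/- arXiv:2405.09351 — 2 statements merged into one kernel-verified Lean document; each statement's English description precedes it below -/
import Mathlib

section
/- Suppose $\nabla \Phi(x)^\top = Z(x) Y(x)$ for all $x$ in an open set $\mathcal{X} \subset \mathbb{R}^n$, where $Z : \mathcal{X} \to \mathbb{R}^{1 \times d}$ and $Y : \mathcal{X} \to \mathbb{R}^{d \times n}$ are continuously differentiable with $d < n$, and suppose $Z(x^*) = 0$ at some point $x^*$. Then $x^*$ is a critical point of $\Phi$ and the Hessian of $\Phi$ at $x^*$ equals the matrix with $i$-th row $\frac{\partial Z}{\partial x_i}(x^*) Y(x^*)$, which has rank at most $d < n$; hence $x^*$ is a degenerate critical point. -/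
/-- Bottleneck degeneracy: if `∇Φ(x)ᵀ = Z(x) Y(x)` with `Z : X → ℝ^{1×d}`,
`Y : X → ℝ^{d×n}`, `d < n`, and `Z(x⁎) = 0`, then `x⁎` is a critical point of
`Φ`, the Hessian at `x⁎` has `i`-th row `(∂Z/∂xᵢ)(x⁎) Y(x⁎)`, its rank is at
most `d < n`, and hence `x⁎` is a degenerate critical point. -/
theorem bottleneck_degenerate_critical_point (n d : ℕ) (hdn : d < n)
    (X : Set (Fin n → ℝ)) (hX : IsOpen X)
    (Φ : (Fin n → ℝ) → ℝ)
    (Z : (Fin n → ℝ) → Fin d → ℝ) (Y : (Fin n → ℝ) → Fin d → Fin n → ℝ)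
    (hZ : ContDiffOn ℝ 1 Z X) (hY : ContDiffOn ℝ 1 Y X)
    (hΦ : ContDiffOn ℝ 2 Φ X)
    (hgrad : ∀ x ∈ X, ∀ v : Fin n → ℝ,
      fderiv ℝ Φ x v = ∑ k, Z x k * ∑ i, Y x k i * v i)
    (x₀ : Fin n → ℝ) (hx₀ : x₀ ∈ X) (hZ0 : Z x₀ = 0) :
    fderiv ℝ Φ x₀ = 0 ∧
      (∀ i j, fderiv ℝ (fun x => fderiv ℝ Φ x (Pi.single j 1)) x₀ (Pi.single i 1)
        = ∑ k, fderiv ℝ (fun x => Z x k) x₀ (Pi.single i 1) * Y x₀ k j) ∧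
      (Matrix.of fun i j : Fin n =>
        fderiv ℝ (fun x => fderiv ℝ Φ x (Pi.single j 1)) x₀
          (Pi.single i 1)).rank ≤ d ∧
      (Matrix.of fun i j : Fin n =>
        fderiv ℝ (fun x => fderiv ℝ Φ x (Pi.single j 1)) x₀
          (Pi.single i 1)).det = 0 := by
  have hXn : X ∈ nhds x₀ := hX.mem_nhds hx₀
  -- critical point
  have hcrit : fderiv ℝ Φ x₀ = 0 := by
    ext v
    simp [hgrad x₀ hx₀ v, hZ0]
  -- differentiability of components
  have hZd : ∀ k, DifferentiableAt ℝ (fun x => Z x k) x₀ := by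
    intro k
    have := (hZ.contDiffAt hXn).differentiableAt one_ne_zero
    exact (differentiableAt_pi.mp this) k
  have hYd : ∀ k j, DifferentiableAt ℝ (fun x => Y x k j) x₀ := by
    intro k j
    have := (hY.contDiffAt hXn).differentiableAt one_ne_zero
    exact differentiableAt_pi.mp (differentiableAt_pi.mp this k) j
  -- Hessian formula
  have hhess : ∀ i j,
      fderiv ℝ (fun x => fderiv ℝ Φ x (Pi.single j 1)) x₀ (Pi.single i 1)
        = ∑ k, fderiv ℝ (fun x => Z x k) x₀ (Pi.single i 1) * Y x₀ k j := by
    intro i j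
    have heq : (fun x => fderiv ℝ Φ x (Pi.single j 1))
        =ᶠ[nhds x₀] fun x => ∑ k, Z x k * Y x k j := by
      filter_upwards [hXn] with x hx
      rw [hgrad x hx]
      congr 1
      ext k
      congr 1
      simp [Pi.single_apply, mul_ite, Finset.sum_ite_eq' Finset.univ j fun i => Y x k i]
    have hfd : HasFDerivAt (fun x => ∑ k, Z x k * Y x k j)
        (∑ k, Y x₀ k j • fderiv ℝ (fun x => Z x k) x₀) x₀ := by
      apply HasFDerivAt.fun_sum
      intro k _
      have h := ((hZd k).hasFDerivAt.fun_mul (hYd k j).hasFDerivAt)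
      have : Z x₀ k = 0 := by rw [hZ0]; rfl
      simpa [this] using h
    rw [heq.fderiv_eq, hfd.fderiv]
    simp [mul_comm]
  refine ⟨hcrit, hhess, ?_, ?_⟩
  · -- rank bound
    have hM : (Matrix.of fun i j : Fin n =>
        fderiv ℝ (fun x => fderiv ℝ Φ x (Pi.single j 1)) x₀ (Pi.single i 1))
        = (Matrix.of fun (i : Fin n) (k : Fin d) =>
            fderiv ℝ (fun x => Z x k) x₀ (Pi.single i 1)) *
          (Matrix.of fun (k : Fin d) (j : Fin n) => Y x₀ k j) := by
      ext i j
      simp [Matrix.mul_apply, hhess i j]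
    rw [hM]
    exact le_trans (Matrix.rank_mul_le_right _ _)
      (le_trans (Matrix.rank_le_card_height _) (by simp))
  · -- det = 0
    by_contra hdet
    have hu : IsUnit (Matrix.of fun i j : Fin n =>
        fderiv ℝ (fun x => fderiv ℝ Φ x (Pi.single j 1)) x₀ (Pi.single i 1)) :=
      (Matrix.isUnit_iff_isUnit_det _).mpr (isUnit_iff_ne_zero.mpr hdet)
    have hr := Matrix.rank_of_isUnit _ hu
    have hle : (Matrix.of fun i j : Fin n =>
        fderiv ℝ (fun x => fderiv ℝ Φ x (Pi.single j 1)) x₀ (Pi.single i 1)).rank ≤ d := by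
      have hM : (Matrix.of fun i j : Fin n =>
          fderiv ℝ (fun x => fderiv ℝ Φ x (Pi.single j 1)) x₀ (Pi.single i 1))
          = (Matrix.of fun (i : Fin n) (k : Fin d) =>
              fderiv ℝ (fun x => Z x k) x₀ (Pi.single i 1)) *
            (Matrix.of fun (k : Fin d) (j : Fin n) => Y x₀ k j) := by
        ext i j
        simp [Matrix.mul_apply, hhess i j]
      rw [hM]
      exact le_trans (Matrix.rank_mul_le_right _ _)
        (le_trans (Matrix.rank_le_card_height _) (by simp))
    rw [hr] at hle
    simp at hle
    omega
end

section
/- Fix $T > 0$, $n < m$, and an open set $\mathcal{X} \subset \mathbb{R}^n$. For every $\Psi \in C^1(\mathcal{X}, \mathbb{R})$, there exist a matrix $W \in \mathbb{R}^{m \times n}$ of rank $n$, a row vector $\widetilde{W} \in \mathbb{R}^{1 \times m}$ of rank 1, $b \in \mathbb{R}^m$, $\tilde{b} \in \mathbb{R}$, and a vector field $f \in C^{0,1}(\mathbb{R} \times \mathbb{R}^m, \mathbb{R}^m)$ such that the solutions of $h' = f(t, h)$, $h(0) = Wx + b$ exist on $[0,T]$ for all $x \in \mathcal{X}$ and $\widetilde{W}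 h_{Wx+b}(T) + \tilde{b} = \Psi(x)$ for all $x \in \mathcal{X}$. -/
/-- Universal embedding of augmented neural ODEs: every `C¹` map
`Ψ : X → ℝ`, `X ⊆ ℝⁿ` open, can be exactly represented as
`x ↦ W̃ h_{Wx+b}(T) + b̃` for full-rank affine layers and a vector field `f`
which is continuous in time and `C¹` in the state on an open set containing the
relevant trajectories. -/
theorem universal_embedding_augmented_node (n m : ℕ) (hnm : n < m)
    (T : ℝ) (hT : 0 < T)
    (X : Set (Fin n → ℝ)) (hX : IsOpen X)
    (Ψ : (Fin n → ℝ) → ℝ) (hΨ : ContDiffOn ℝ 1 Ψ X) :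
    ∃ (W : Matrix (Fin m) (Fin n) ℝ) (Wt : Matrix (Fin 1) (Fin m) ℝ)
      (b : Fin m → ℝ) (bt : ℝ)
      (f : ℝ → (Fin m → ℝ) → (Fin m → ℝ))
      (Ω : Set (Fin m → ℝ))
      (H : (Fin n → ℝ) → ℝ → (Fin m → ℝ)),
      W.rank = n ∧ Wt.rank = 1 ∧ IsOpen Ω ∧
      ContinuousOn (fun pr : ℝ × (Fin m → ℝ) => f pr.1 pr.2)
        ((Set.univ : Set ℝ) ×ˢ Ω) ∧
      (∀ t : ℝ, ContDiffOn ℝ 1 (f t) Ω) ∧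
      (∀ x ∈ X, H x 0 = W.mulVec x + b) ∧
      (∀ x ∈ X, ∀ t ∈ Set.Icc (0 : ℝ) T,
        H x t ∈ Ω ∧ HasDerivAt (H x) (f t (H x t)) t) ∧
      (∀ x ∈ X, Wt.mulVec (H x T) 0 + bt = Ψ x) := by
  -- the extra coordinate
  set k : Fin m := ⟨n, hnm⟩ with hk
  -- projection onto the first n coordinates
  set proj : (Fin m → ℝ) → (Fin n → ℝ) := fun h j => h (Fin.castLE hnm.le j) with hproj
  have hprojCD : ContDiff ℝ 1 proj := by
    rw [contDiff_pi]
    intro j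
    exact (ContinuousLinearMap.proj (R := ℝ) (φ := fun _ : Fin m => ℝ)
      (Fin.castLE hnm.le j)).contDiff
  set W : Matrix (Fin m) (Fin n) ℝ :=
    Matrix.of fun i j => if (i : ℕ) = (j : ℕ) then (1 : ℝ) else 0 with hW
  set Wt : Matrix (Fin 1) (Fin m) ℝ :=
    Matrix.of fun _ i => if i = k then (1 : ℝ) else 0 with hWt
  -- key computations
  have hmulW : ∀ (x : Fin n → ℝ) (j : Fin n),
      W.mulVec x (Fin.castLE hnm.le j) = x j := by
    intro x j
    simp only [Matrix.mulVec, dotProduct, hW, Matrix.of_apply, Fin.coe_castLE]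
    rw [Finset.sum_eq_single j]
    · simp
    · intro b _ hb
      rw [if_neg (fun hc => hb (Fin.val_injective hc).symm), zero_mul]
    · simp
  have hmulWk : ∀ (x : Fin n → ℝ), W.mulVec x k = 0 := by
    intro x
    simp only [Matrix.mulVec, dotProduct, hW, Matrix.of_apply, hk]
    apply Finset.sum_eq_zero
    intro j _
    rw [if_neg (by omega : ¬ (n = (j:ℕ))), zero_mul]
  have hprojW : ∀ (x : Fin n → ℝ), proj (W.mulVec x) = x := by
    intro x; funext j; exact hmulW x j
  have hmulWt : ∀ (v : Fin m → ℝ), Wt.mulVec v 0 = v k := by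
    intro v
    simp only [Matrix.mulVec, dotProduct, hWt, Matrix.of_apply]
    rw [Finset.sum_eq_single k]
    · simp
    · intro b _ hb; rw [if_neg hb, zero_mul]
    · simp
  set g : (Fin m → ℝ) → (Fin m → ℝ) :=
    fun h => (Ψ (proj h) / T) • (Pi.single k (1 : ℝ) : Fin m → ℝ) with hg
  set f : ℝ → (Fin m → ℝ) → (Fin m → ℝ) := fun _ h => g h with hf
  set Ω : Set (Fin m → ℝ) := proj ⁻¹' X with hΩ
  set H : (Fin n → ℝ) → ℝ → (Fin m → ℝ) :=
    fun x t => W.mulVec x + t • ((Ψ x / T) • (Pi.single k (1 : ℝ) : Fin m → ℝ)) with hH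
  have hΩopen : IsOpen Ω := hX.preimage hprojCD.continuous
  have hmaps : Set.MapsTo proj Ω X := fun h hh => hh
  have hgCD : ContDiffOn ℝ 1 g Ω := by
    refine ContDiffOn.smul (f := fun h => Ψ (proj h) / T) (g := fun _ => (Pi.single k (1 : ℝ) : Fin m → ℝ)) ?_ ?_
    · exact ((hΨ.comp (hprojCD.contDiffOn) hmaps).div_const T)
    · exact contDiffOn_const
  have hprojH : ∀ (x : Fin n → ℝ) (t : ℝ), proj (H x t) = x := by
    intro x t
    funext j
    simp only [hH, hproj, Pi.add_apply, Pi.smul_apply, smul_eq_mul]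
    have hne : Fin.castLE hnm.le j ≠ k := by
      intro hc
      have := congrArg Fin.val hc
      simp [hk] at this
      omega
    rw [Pi.single_eq_of_ne hne]
    have := hmulW x j
    rw [this]; ring
  refine ⟨W, Wt, 0, 0, f, Ω, H, ?_, ?_, hΩopen, ?_, ?_, ?_, ?_, ?_⟩
  · -- rank W = n
    have hinj : Function.Injective W.mulVecLin := by
      intro x y hxy
      have : proj (W.mulVec x) = proj (W.mulVec y) := by
        simp only [Matrix.mulVecLin_apply] at hxy; rw [hxy]
      rwa [hprojW, hprojW] at this
    rw [Matrix.rank, LinearMap.finrank_range_of_inj hinj]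
    simp
  · -- rank Wt = 1
    have hsurj : Function.Surjective Wt.mulVecLin := by
      intro y
      refine ⟨Pi.single k (y 0), ?_⟩
      funext i
      have : i = 0 := Subsingleton.elim _ _
      subst this
      rw [Matrix.mulVecLin_apply, hmulWt, Pi.single_eq_same]
    rw [Matrix.rank, LinearMap.range_eq_top.mpr hsurj]
    simp
  · -- continuity of f
    have : ContinuousOn g Ω := hgCD.continuousOn
    exact this.comp continuousOn_snd (fun p hp => hp.2)
  · intro t
    exact hgCD
  · intro x hx
    funext i
    simp [hH]
  · intro x hx t ht
    constructor
    · simp only [hΩ, Set.mem_preimage, hprojH x t]; exact hx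
    · have h1 : HasDerivAt (fun t : ℝ => t • ((Ψ x / T) • (Pi.single k (1 : ℝ) : Fin m → ℝ)))
          ((Ψ x / T) • (Pi.single k (1 : ℝ) : Fin m → ℝ)) t := by
        simpa using (hasDerivAt_id t).smul_const ((Ψ x / T) • (Pi.single k (1 : ℝ) : Fin m → ℝ))
      have h2 := h1.const_add (W.mulVec x)
      have : f t (H x t) = (Ψ x / T) • (Pi.single k (1 : ℝ) : Fin m → ℝ) := by
        simp only [hf, hg, hprojH x t]
      rw [this]
      exact h2
  · intro x hx
    rw [hmulWt, add_zero]
    simp only [hH, Pi.add_apply, Pi.smul_apply, smul_eq_mul, hmulWk x,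
      Pi.single_eq_same, zero_add]
    field_simp
end
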